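/- arXiv:1406.3898 — 4 statements merged into one kernel-verified Lean document; each statement's English description precedes it below -/
import Mathlib

section
/- For any Hermitian matrix h that is positive semidefinite and any matrix O (over the complex numbers, of the same finite dimension), the operator norm of the commutator [h, O] satisfies ‖h*O - O*h‖ ≤ ‖h‖ * ‖O‖. -/
open scoped Matrix.Norms.L2Operator ComplexOrder Pointwise

noncomputable instance matrixCStarAlgebra {n : ℕ} :
    CStarAlgebra (Matrix (Fin n) (Fin n) ℂ) := Matrix.instCStarAlgebra

lemma isHermitian_spectrum_complex {n : ℕ} {A : Matrix (Fin n) (Fin n) ℂ}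
    (hA : A.IsHermitian) :
    spectrum ℂ A = Set.range (fun i => (hA.eigenvalues i : ℂ)) := by
  conv_lhs => rw [hA.spectral_theorem]
  rw [Unitary.conjStarAlgAut_apply, Unitary.spectrum_star_right_conjugate, spectrum_diagonal]
  rfl

/-- For any Hermitian positive semidefinite matrix `h` and any matrix `O`,
the operator norm of the commutator satisfies `‖h*O - O*h‖ ≤ ‖h‖ * ‖O‖`. -/
theorem commutator_norm_le {n : ℕ} (h O : Matrix (Fin n) (Fin n) ℂ)
    (hh : h.PosSemidef) :
    ‖h * O - O * h‖ ≤ ‖h‖ * ‖O‖ := by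
  rcases Nat.eq_zero_or_pos n with rfl | hn
  · have : h * O - O * h = 0 := Subsingleton.elim _ _
    rw [this, norm_zero]
    positivity
  haveI : Nonempty (Fin n) := ⟨⟨0, hn⟩⟩
  set c : ℝ := ‖h‖ / 2 with hc
  have hc0 : 0 ≤ c := by positivity
  set s : Matrix (Fin n) (Fin n) ℂ := algebraMap ℂ _ (c : ℂ) with hs
  set h' : Matrix (Fin n) (Fin n) ℂ := h - s with hh'
  -- h' is selfadjoint
  have hsa : IsSelfAdjoint h' := by
    refine IsSelfAdjoint.sub ?_ ?_
    · exact hh.1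
    · rw [hs]
      exact IsSelfAdjoint.algebraMap _ (by rw [IsSelfAdjoint, Complex.star_def, Complex.conj_ofReal])
  -- every eigenvalue of h lies in [0, ‖h‖]
  have hev : ∀ i, hh.1.eigenvalues i ∈ Set.Icc (0:ℝ) ‖h‖ := by
    intro i
    refine ⟨hh.eigenvalues_nonneg i, ?_⟩
    have hmem := hh.1.eigenvalues_mem_spectrum_real i
    have := spectrum.norm_le_norm_of_mem hmem
    calc hh.1.eigenvalues i ≤ |hh.1.eigenvalues i| := le_abs_self _
      _ ≤ ‖h‖ := this
  -- bound the norm of h'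
  have key : ‖h'‖ ≤ c := by
    rw [← hsa.toReal_spectralRadius_complex_eq_norm]
    have hspec : spectrum ℂ h' = spectrum ℂ h - ({(c : ℂ)} : Set ℂ) := by
      rw [hh', hs]
      exact (spectrum.sub_singleton_eq h (c : ℂ)).symm
    have hsr : spectralRadius ℂ h' ≤ ENNReal.ofReal c := by
      rw [spectralRadius]
      refine iSup₂_le fun k hk => ?_
      rw [hspec, isHermitian_spectrum_complex hh.1] at hk
      obtain ⟨μ, ⟨i, rfl⟩, cc, hcc, rfl⟩ := hk
      simp only [Set.mem_singleton_iff] at hcc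
      subst hcc
      have hi := hev i
      have habs : ‖((hh.1.eigenvalues i : ℂ)) - (c:ℂ)‖ ≤ c := by
        rw [show ((hh.1.eigenvalues i : ℂ)) - (c:ℂ) = ((hh.1.eigenvalues i - c : ℝ) : ℂ) by
          push_cast; ring]
        rw [Complex.norm_real]
        rw [Real.norm_eq_abs, abs_le]
        constructor
        · have := hi.1; linarith
        · have := hi.2; rw [hc]; linarith [hi.2]
      calc (‖((hh.1.eigenvalues i : ℂ)) - (c:ℂ)‖₊ : ENNReal)
          ≤ ENNReal.ofReal ‖((hh.1.eigenvalues i : ℂ)) - (c:ℂ)‖ :=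
            (ofReal_norm _).ge
        _ ≤ ENNReal.ofReal c := ENNReal.ofReal_le_ofReal habs
    calc (spectralRadius ℂ h').toReal ≤ (ENNReal.ofReal c).toReal :=
          ENNReal.toReal_mono ENNReal.ofReal_ne_top hsr
      _ = c := ENNReal.toReal_ofReal hc0
  -- the commutator with h equals the commutator with h'
  have hcomm : h * O - O * h = h' * O - O * h' := by
    rw [hh', sub_mul, mul_sub, hs, Algebra.commutes (c : ℂ) O]
    abel
  rw [hcomm]
  calc ‖h' * O - O * h'‖ ≤ ‖h' * O‖ + ‖O * h'‖ := norm_sub_le _ _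
    _ ≤ ‖h'‖ * ‖O‖ + ‖O‖ * ‖h'‖ := add_le_add (norm_mul_le _ _) (norm_mul_le _ _)
    _ ≤ c * ‖O‖ + ‖O‖ * c := by
        have hO : (0:ℝ) ≤ ‖O‖ := norm_nonneg _
        nlinarith [norm_nonneg h']
    _ = ‖h‖ * ‖O‖ := by rw [hc]; ring
end

section
/- Let H be a Hermitian matrix and let Π₁ be the spectral projection of H onto eigenvalues ≥ ε′ and Π₂ the spectral projection onto eigenvalues ≤ ε. Then for any matrix A and any s ≥ 0, ‖Π₁ A Π₂‖ ≤ e^{-s(ε′-ε)} · ‖e^{sH} A e^{-sH}‖. -/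
open scoped Matrix.Norms.L2Operator Classical ComplexOrder

/-- The spectral projection of a Hermitian matrix `H` onto the span of
eigenvectors whose eigenvalues lie in the set `S`. -/
noncomputable def spectralProj {n : ℕ} {H : Matrix (Fin n) (Fin n) ℂ}
    (hH : H.IsHermitian) (S : Set ℝ) : Matrix (Fin n) (Fin n) ℂ :=
  (hH.eigenvectorUnitary : Matrix (Fin n) (Fin n) ℂ) *
    (Matrix.diagonal fun i => if hH.eigenvalues i ∈ S then (1 : ℂ) else 0) *
    star (hH.eigenvectorUnitary : Matrix (Fin n) (Fin n) ℂ)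

/-- The eigenvalues of a Hermitian matrix listed in increasing order (with multiplicity). -/
noncomputable def sortedEig {n : ℕ} {H : Matrix (Fin n) (Fin n) ℂ}
    (hH : H.IsHermitian) : Fin n → ℝ :=
  hH.eigenvalues ∘ Tuple.sort hH.eigenvalues

/-- L2 operator norm of a diagonal matrix is bounded by a bound on the entries. -/
lemma l2_opNorm_diagonal_le {n : ℕ} (v : Fin n → ℂ) {c : ℝ} (hc : 0 ≤ c)
    (h : ∀ i, ‖v i‖ ≤ c) : ‖Matrix.diagonal v‖ ≤ c := by
  rw [Matrix.l2_opNorm_def]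
  refine ContinuousLinearMap.opNorm_le_bound _ hc fun x => ?_
  have hTx : ∀ i, ((Matrix.toEuclideanLin.trans LinearMap.toContinuousLinearMap
      (Matrix.diagonal v)) x) i = v i * x i := by
    intro i
    simp [Matrix.toEuclideanLin_apply, Matrix.mulVec_diagonal]
  rw [EuclideanSpace.norm_eq, EuclideanSpace.norm_eq]
  simp only [hTx]
  have h1 : ∑ i, ‖v i * x i‖ ^ 2 ≤ c ^ 2 * ∑ i, ‖x i‖ ^ 2 := by
    rw [Finset.mul_sum]
    refine Finset.sum_le_sum fun i _ => ?_
    rw [norm_mul, mul_pow]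
    exact mul_le_mul_of_nonneg_right (pow_le_pow_left₀ (norm_nonneg _) (h i) 2) (sq_nonneg _)
  refine (Real.sqrt_le_sqrt h1).trans (le_of_eq ?_)
  rw [Real.sqrt_mul (sq_nonneg c), Real.sqrt_sq hc]

/-- `‖Π₁ A Π₂‖ ≤ e^{-s(ε′-ε)} ‖e^{sH} A e^{-sH}‖` where `Π₁`, `Π₂` are the spectral
projections of the Hermitian matrix `H` onto eigenvalues `≥ ε′` and `≤ ε`. -/
theorem proj_sandwich_bound {n : ℕ} {H : Matrix (Fin n) (Fin n) ℂ} (hH : H.IsHermitian)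
    (A : Matrix (Fin n) (Fin n) ℂ) (ε ε' s : ℝ) (hε : ε < ε') (hs : 0 ≤ s) :
    ‖spectralProj hH (Set.Ici ε') * A * spectralProj hH (Set.Iic ε)‖ ≤
      Real.exp (-s * (ε' - ε)) *
        ‖NormedSpace.exp (s • H) * A * NormedSpace.exp ((-s) • H)‖ := by
  classical
  set U : Matrix (Fin n) (Fin n) ℂ := (hH.eigenvectorUnitary : Matrix (Fin n) (Fin n) ℂ) with hUdef
  have hUmem : U ∈ unitary (Matrix (Fin n) (Fin n) ℂ) := hH.eigenvectorUnitary.2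
  have hU1 : U * star U = 1 := (Unitary.mem_iff.mp hUmem).2
  have hU2 : star U * U = 1 := (Unitary.mem_iff.mp hUmem).1
  have hUunit : IsUnit U := ⟨Unitary.toUnits ⟨U, hUmem⟩, rfl⟩
  have hUinv : U⁻¹ = star U := Matrix.inv_eq_right_inv hU1
  -- exponential of t • H
  have hexp : ∀ t : ℝ, NormedSpace.exp (t • H) =
      U * Matrix.diagonal (fun i => Complex.exp ((t * hH.eigenvalues i : ℝ) : ℂ)) * star U := by
    intro t
    have hdiag : t • Matrix.diagonal (RCLike.ofReal ∘ hH.eigenvalues : Fin n → ℂ) =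
        Matrix.diagonal (fun i => ((t * hH.eigenvalues i : ℝ) : ℂ)) := by
      ext i j
      by_cases hij : i = j <;>
        simp [hij, Matrix.diagonal_apply, Complex.real_smul, Complex.ofReal_mul]
    have h0 : t • H = U * Matrix.diagonal (fun i => ((t * hH.eigenvalues i : ℝ) : ℂ)) * U⁻¹ := by
      rw [hUinv]
      conv_lhs => rw [hH.spectral_theorem, Unitary.conjStarAlgAut_apply]
      rw [← hdiag]
      simp only [mul_smul_comm, smul_mul_assoc]
      rfl
    rw [h0, Matrix.exp_conj U _ hUunit, Matrix.exp_diagonal, hUinv]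
    have hfun : (NormedSpace.exp fun i => ((t * hH.eigenvalues i : ℝ) : ℂ)) =
        fun i => Complex.exp ((t * hH.eigenvalues i : ℝ) : ℂ) := by
      funext i
      rw [Pi.coe_exp, ← Complex.exp_eq_exp_ℂ]
    rw [hfun]
  set Ep := NormedSpace.exp (s • H) with hEp
  set Em := NormedSpace.exp ((-s) • H) with hEm
  -- collapsing conjugated products
  have hconj_mul : ∀ D₁ D₂ : Fin n → ℂ,
      (U * Matrix.diagonal D₁ * star U) * (U * Matrix.diagonal D₂ * star U) =
        U * Matrix.diagonal (fun i => D₁ i * D₂ i) * star U := by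
    intro D₁ D₂
    have : (U * Matrix.diagonal D₁ * star U) * (U * Matrix.diagonal D₂ * star U) =
        U * Matrix.diagonal D₁ * (star U * U) * Matrix.diagonal D₂ * star U := by
      noncomm_ring
    rw [this, hU2, mul_one, mul_assoc U, Matrix.diagonal_mul_diagonal]
  have hP1 : spectralProj hH (Set.Ici ε') =
      U * Matrix.diagonal (fun i => if hH.eigenvalues i ∈ Set.Ici ε' then (1:ℂ) else 0) * star U :=
    rfl
  have hP2 : spectralProj hH (Set.Iic ε) =
      U * Matrix.diagonal (fun i => if hH.eigenvalues i ∈ Set.Iic ε then (1:ℂ) else 0) * star U :=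
    rfl
  -- key norm bounds
  have hnorm_conj : ∀ D : Fin n → ℂ, ‖U * Matrix.diagonal D * star U‖ = ‖Matrix.diagonal D‖ := by
    intro D
    rw [mul_assoc, CStarRing.norm_mem_unitary_mul _ hUmem,
      CStarRing.norm_mul_mem_unitary _ (Unitary.star_mem hUmem)]
  have hb1 : ‖spectralProj hH (Set.Ici ε') * Em‖ ≤ Real.exp (-s * ε') := by
    rw [hEm, hP1, hexp (-s), hconj_mul, hnorm_conj]
    refine l2_opNorm_diagonal_le _ (Real.exp_nonneg _) fun i => ?_
    by_cases hi : hH.eigenvalues i ∈ Set.Ici ε'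
    · simp only [hi, if_pos, one_mul]
      rw [Complex.norm_exp, Complex.ofReal_re]
      apply Real.exp_le_exp.mpr
      have : ε' ≤ hH.eigenvalues i := hi
      nlinarith
    · simp [hi, Real.exp_nonneg]
  have hb2 : ‖Ep * spectralProj hH (Set.Iic ε)‖ ≤ Real.exp (s * ε) := by
    rw [hEp, hP2, hexp s, hconj_mul, hnorm_conj]
    refine l2_opNorm_diagonal_le _ (Real.exp_nonneg _) fun i => ?_
    by_cases hi : hH.eigenvalues i ∈ Set.Iic ε
    · simp only [hi, if_pos, mul_one]
      rw [Complex.norm_exp, Complex.ofReal_re]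
      apply Real.exp_le_exp.mpr
      have : hH.eigenvalues i ≤ ε := hi
      nlinarith
    · simp [hi, Real.exp_nonneg]
  -- splitting identity
  have hcomm : Commute ((-s) • H) (s • H) := ((Commute.refl H).smul_left (-s)).smul_right s
  have hEE : Em * Ep = 1 := by
    rw [hEm, hEp, ← Matrix.exp_add_of_commute _ _ hcomm, ← add_smul, neg_add_cancel,
      zero_smul, NormedSpace.exp_zero]
  have hcancel : ∀ X : Matrix (Fin n) (Fin n) ℂ, Em * (Ep * X) = X := fun X => by
    rw [← mul_assoc, hEE, one_mul]
  have hsplit : spectralProj hH (Set.Ici ε') * A * spectralProj hH (Set.Iic ε) =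
      (spectralProj hH (Set.Ici ε') * Em) * (Ep * A * Em) * (Ep * spectralProj hH (Set.Iic ε)) := by
    simp only [mul_assoc, hcancel]
  calc ‖spectralProj hH (Set.Ici ε') * A * spectralProj hH (Set.Iic ε)‖
      = ‖(spectralProj hH (Set.Ici ε') * Em) * (Ep * A * Em) *
          (Ep * spectralProj hH (Set.Iic ε))‖ := by rw [hsplit]
    _ ≤ ‖spectralProj hH (Set.Ici ε') * Em‖ * ‖Ep * A * Em‖ *
          ‖Ep * spectralProj hH (Set.Iic ε)‖ :=
        le_trans (norm_mul_le _ _)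
          (mul_le_mul_of_nonneg_right (norm_mul_le _ _) (norm_nonneg _))
    _ ≤ Real.exp (-s * ε') * ‖Ep * A * Em‖ * Real.exp (s * ε) := by
        gcongr
    _ = Real.exp (-s * (ε' - ε)) * ‖Ep * A * Em‖ := by
        rw [mul_right_comm, ← Real.exp_add]
        ring_nf
end

section
/- Let H and H̃ be Hermitian n×n matrices with H̃ ≤ H, and suppose that the projection P̃ onto the span of the j+1 lowest eigenvectors of H̃ satisfies ‖P̃(H - H̃)P̃‖ ≤ δ. Then the eigenvalues (in increasing order, with multiplicity) satisfy ε_j - δ ≤ ε̃_j ≤ ε_j. -/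
open scoped Matrix.Norms.L2Operator Classical ComplexOrder

/-- The orthogonal projection onto the span of the `j+1` lowest eigenvectors of a
Hermitian matrix (eigenvalues taken in increasing order with multiplicity). -/
noncomputable def lowProj {n : ℕ} {H : Matrix (Fin n) (Fin n) ℂ}
    (hH : H.IsHermitian) (j : ℕ) : Matrix (Fin n) (Fin n) ℂ :=
  (hH.eigenvectorUnitary : Matrix (Fin n) (Fin n) ℂ) *
    (Matrix.diagonal fun i =>
      if ((Tuple.sort hH.eigenvalues).symm i : ℕ) < j + 1 then (1 : ℂ) else 0) *
    star (hH.eigenvectorUnitary : Matrix (Fin n) (Fin n) ℂ)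

section Helpers

open Matrix

variable {n : ℕ}

lemma repr_toEuclideanLin {M : Matrix (Fin n) (Fin n) ℂ} (hM : M.IsHermitian)
    (v : EuclideanSpace ℂ (Fin n)) (i : Fin n) :
    hM.eigenvectorBasis.repr (Matrix.toEuclideanLin M v) i
      = hM.eigenvalues i * hM.eigenvectorBasis.repr v i := by
  rw [OrthonormalBasis.repr_apply_apply, OrthonormalBasis.repr_apply_apply,
    ← (Matrix.isHermitian_iff_isSymmetric.mp hM) (hM.eigenvectorBasis i) v]
  have h1 : Matrix.toEuclideanLin M (hM.eigenvectorBasis i)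
      = (hM.eigenvalues i : ℂ) • hM.eigenvectorBasis i := by
    apply (WithLp.equiv 2 _).injective
    simp [Matrix.toEuclideanLin_apply, hM.mulVec_eigenvectorBasis i]
  rw [h1, inner_smul_left]
  simp

lemma re_inner_toEuclideanLin {M : Matrix (Fin n) (Fin n) ℂ} (hM : M.IsHermitian)
    (v : EuclideanSpace ℂ (Fin n)) :
    (inner ℂ v (Matrix.toEuclideanLin M v) : ℂ).re
      = ∑ i, hM.eigenvalues i * ‖hM.eigenvectorBasis.repr v i‖ ^ 2 := by
  rw [← hM.eigenvectorBasis.repr.inner_map_map v (Matrix.toEuclideanLin M v)]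
  rw [PiLp.inner_apply]
  simp only [RCLike.inner_apply]
  rw [Complex.re_sum]
  congr 1; ext i
  rw [repr_toEuclideanLin]
  set a := hM.eigenvectorBasis.repr v i
  have : ↑(hM.eigenvalues i) * a * (starRingEnd ℂ) a
      = (hM.eigenvalues i : ℂ) * ((starRingEnd ℂ) a * a) := by ring
  rw [this, RCLike.conj_mul]
  simp
  norm_cast
  left; rfl

lemma norm_sq_eq_sum_repr {M : Matrix (Fin n) (Fin n) ℂ} (hM : M.IsHermitian)
    (v : EuclideanSpace ℂ (Fin n)) :
    ‖v‖ ^ 2 = ∑ i, ‖hM.eigenvectorBasis.repr v i‖ ^ 2 := by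
  rw [← hM.eigenvectorBasis.repr.norm_map v, EuclideanSpace.norm_eq,
    Real.sq_sqrt (by positivity)]

/-- Span of selected eigenvectors. -/
noncomputable def eigSpan {M : Matrix (Fin n) (Fin n) ℂ} (hM : M.IsHermitian)
    (p : Fin n → Prop) : Submodule ℂ (EuclideanSpace ℂ (Fin n)) :=
  Submodule.span ℂ (Set.range fun i : {i // p i} => hM.eigenvectorBasis i)

lemma finrank_eigSpan {M : Matrix (Fin n) (Fin n) ℂ} (hM : M.IsHermitian)
    (p : Fin n → Prop) :
    Module.finrank ℂ (eigSpan hM p) = Nat.card {i // p i} := by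
  rw [Nat.card_eq_fintype_card]
  apply finrank_span_eq_card
  exact (hM.eigenvectorBasis.orthonormal.linearIndependent).comp _ Subtype.val_injective

lemma repr_eq_zero_of_mem_eigSpan {M : Matrix (Fin n) (Fin n) ℂ} (hM : M.IsHermitian)
    {p : Fin n → Prop} {v : EuclideanSpace ℂ (Fin n)} (hv : v ∈ eigSpan hM p)
    {i : Fin n} (hi : ¬ p i) : hM.eigenvectorBasis.repr v i = 0 := by
  induction hv using Submodule.span_induction with
  | mem x hx =>
    obtain ⟨k, rfl⟩ := hx
    rw [OrthonormalBasis.repr_self]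
    rw [EuclideanSpace.single_apply]
    simp only [ite_eq_right_iff]
    intro h; exact absurd (h ▸ k.2) hi
  | zero => simp
  | add x y _ _ hx hy => simp [hx, hy]
  | smul a x _ hx => simp [hx]

lemma card_lt_subtype {m : ℕ} (hm : m ≤ n) :
    Fintype.card {k : Fin n // (k : ℕ) < m} = m := by
  rw [Fintype.card_congr
    (⟨fun k => ⟨k.1, k.2⟩, fun a => ⟨⟨a.1, lt_of_lt_of_le a.2 hm⟩, a.2⟩,
      fun k => by ext; rfl, fun a => by ext; rfl⟩ : {k : Fin n // (k : ℕ) < m} ≃ Fin m)]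
  exact Fintype.card_fin m

lemma card_ge_subtype (m : ℕ) :
    Fintype.card {k : Fin n // m ≤ (k : ℕ)} = n - m := by
  rw [Fintype.card_congr
    (⟨fun k => ⟨k.1 - m, by omega⟩,
      fun a => ⟨⟨a.1 + m, by have := a.2; omega⟩, by simp⟩,
      fun k => by ext; have := k.2; simp; omega, fun a => by ext; simp⟩ :
      {k : Fin n // m ≤ (k : ℕ)} ≃ Fin (n - m))]
  exact Fintype.card_fin _

lemma card_perm_subtype (σ : Equiv.Perm (Fin n)) (p : Fin n → Prop) :
    Nat.card {i : Fin n // p (σ.symm i)} = Nat.card {k : Fin n // p k} :=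
  Nat.card_congr (Equiv.subtypeEquiv σ.symm (fun _ => Iff.rfl))

lemma card_lt_subtype' {m : ℕ} (hm : m ≤ n) :
    Nat.card {k : Fin n // (k : ℕ) < m} = m := by
  rw [Nat.card_eq_fintype_card]; exact card_lt_subtype hm

lemma card_ge_subtype' (m : ℕ) :
    Nat.card {k : Fin n // m ≤ (k : ℕ)} = n - m := by
  rw [Nat.card_eq_fintype_card]; exact card_ge_subtype m

lemma quad_le_of_mem {M : Matrix (Fin n) (Fin n) ℂ} (hM : M.IsHermitian)
    {p : Fin n → Prop} {c : ℝ} (hc : ∀ i, p i → hM.eigenvalues i ≤ c)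
    {v : EuclideanSpace ℂ (Fin n)} (hv : v ∈ eigSpan hM p) :
    (inner ℂ v (Matrix.toEuclideanLin M v) : ℂ).re ≤ c * ‖v‖ ^ 2 := by
  rw [re_inner_toEuclideanLin, norm_sq_eq_sum_repr hM, Finset.mul_sum]
  apply Finset.sum_le_sum; intro i _
  by_cases hp : p i
  · exact mul_le_mul_of_nonneg_right (hc i hp) (by positivity)
  · rw [repr_eq_zero_of_mem_eigSpan hM hv hp]; simp

lemma quad_ge_of_mem {M : Matrix (Fin n) (Fin n) ℂ} (hM : M.IsHermitian)
    {p : Fin n → Prop} {c : ℝ} (hc : ∀ i, p i → c ≤ hM.eigenvalues i)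
    {v : EuclideanSpace ℂ (Fin n)} (hv : v ∈ eigSpan hM p) :
    c * ‖v‖ ^ 2 ≤ (inner ℂ v (Matrix.toEuclideanLin M v) : ℂ).re := by
  rw [re_inner_toEuclideanLin, norm_sq_eq_sum_repr hM, Finset.mul_sum]
  apply Finset.sum_le_sum; intro i _
  by_cases hp : p i
  · exact mul_le_mul_of_nonneg_right (hc i hp) (by positivity)
  · rw [repr_eq_zero_of_mem_eigSpan hM hv hp]; simp

lemma sorted_le_eig {M : Matrix (Fin n) (Fin n) ℂ} (hM : M.IsHermitian)
    (j i : Fin n) (hi : (j : ℕ) ≤ ((Tuple.sort hM.eigenvalues).symm i : ℕ)) :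
    sortedEig hM j ≤ hM.eigenvalues i := by
  have h := Tuple.monotone_sort hM.eigenvalues
    (show j ≤ (Tuple.sort hM.eigenvalues).symm i from hi)
  simpa [sortedEig, Function.comp] using h

lemma eig_le_sorted {M : Matrix (Fin n) (Fin n) ℂ} (hM : M.IsHermitian)
    (j i : Fin n) (hi : ((Tuple.sort hM.eigenvalues).symm i : ℕ) ≤ (j : ℕ)) :
    hM.eigenvalues i ≤ sortedEig hM j := by
  have h := Tuple.monotone_sort hM.eigenvalues
    (show (Tuple.sort hM.eigenvalues).symm i ≤ j from hi)
  simpa [sortedEig, Function.comp] using h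

lemma sortedEig_le_of_subspace {M : Matrix (Fin n) (Fin n) ℂ} (hM : M.IsHermitian)
    (j : Fin n) (c : ℝ) (V : Submodule ℂ (EuclideanSpace ℂ (Fin n)))
    (hdim : (j : ℕ) + 1 ≤ Module.finrank ℂ V)
    (hq : ∀ v ∈ V, (inner ℂ v (Matrix.toEuclideanLin M v) : ℂ).re ≤ c * ‖v‖ ^ 2) :
    sortedEig hM j ≤ c := by
  set W := eigSpan hM (fun i => (j : ℕ) ≤ ((Tuple.sort hM.eigenvalues).symm i : ℕ)) with hWdef
  have hW : Module.finrank ℂ W = n - j := by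
    rw [hWdef, finrank_eigSpan,
      card_perm_subtype (Tuple.sort hM.eigenvalues) (fun k => (j : ℕ) ≤ (k : ℕ)),
      card_ge_subtype']
  have hpos : 0 < Module.finrank ℂ ↥(V ⊓ W) := by
    have hsum := Submodule.finrank_sup_add_finrank_inf_eq V W
    have hle : Module.finrank ℂ ↥(V ⊔ W) ≤ n :=
      le_trans (Submodule.finrank_le _) (by simp)
    have hj := j.2
    omega
  obtain ⟨⟨v, hvVW⟩, hv0⟩ := Module.finrank_pos_iff_exists_ne_zero.mp hpos
  have hv0' : v ≠ 0 := by simpa [Submodule.mk_eq_zero] using hv0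
  have h1 : sortedEig hM j * ‖v‖ ^ 2 ≤ (inner ℂ v (Matrix.toEuclideanLin M v) : ℂ).re :=
    quad_ge_of_mem hM (fun i hi => sorted_le_eig hM j i hi) hvVW.2
  have h2 := hq v hvVW.1
  have hn : 0 < ‖v‖ ^ 2 := by
    have := norm_pos_iff.mpr hv0'
    positivity
  nlinarith

lemma re_inner_nonneg_of_posSemidef {A : Matrix (Fin n) (Fin n) ℂ} (hA : A.PosSemidef)
    (v : EuclideanSpace ℂ (Fin n)) :
    0 ≤ (inner ℂ v (Matrix.toEuclideanLin A v) : ℂ).re := by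
  have h := hA.dotProduct_mulVec_nonneg ((WithLp.equiv 2 _) v)
  rw [EuclideanSpace.inner_eq_star_dotProduct, Matrix.ofLp_toEuclideanLin_apply, dotProduct_comm]
  simpa using (Complex.le_def.mp h).1

lemma lowProj_fix {Ht : Matrix (Fin n) (Fin n) ℂ} (hHt : Ht.IsHermitian) (j : ℕ)
    {v : EuclideanSpace ℂ (Fin n)}
    (hv : v ∈ eigSpan hHt (fun i => ((Tuple.sort hHt.eigenvalues).symm i : ℕ) < j + 1)) :
    Matrix.toEuclideanLin (lowProj hHt j) v = v := by
  have hsub : eigSpan hHt (fun i => ((Tuple.sort hHt.eigenvalues).symm i : ℕ) < j + 1)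
      ≤ LinearMap.eqLocus (Matrix.toEuclideanLin (lowProj hHt j)) LinearMap.id := by
    apply Submodule.span_le.mpr
    rintro _ ⟨k, rfl⟩
    show Matrix.toEuclideanLin (lowProj hHt j) (hHt.eigenvectorBasis k)
      = hHt.eigenvectorBasis k
    apply (WithLp.equiv 2 _).injective
    rw [WithLp.equiv_apply, WithLp.equiv_apply, Matrix.ofLp_toEuclideanLin_apply]
    show (lowProj hHt j) *ᵥ ⇑(hHt.eigenvectorBasis k) = ⇑(hHt.eigenvectorBasis k)
    rw [lowProj, ← Matrix.mulVec_mulVec, ← Matrix.mulVec_mulVec,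
      Matrix.IsHermitian.star_eigenvectorUnitary_mulVec,
      Matrix.diagonal_mulVec_single, if_pos k.2, mul_one,
      Matrix.IsHermitian.eigenvectorUnitary_mulVec]
  exact hsub hv

lemma lowProj_conjTranspose {Ht : Matrix (Fin n) (Fin n) ℂ} (hHt : Ht.IsHermitian) (j : ℕ) :
    star (lowProj hHt j) = lowProj hHt j := by
  simp only [lowProj, Matrix.star_eq_conjTranspose, Matrix.conjTranspose_mul,
    Matrix.conjTranspose_conjTranspose, Matrix.diagonal_conjTranspose]
  rw [mul_assoc]
  have hstar : (star fun i =>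
      if ((Tuple.sort hHt.eigenvalues).symm i : ℕ) < j + 1 then (1:ℂ) else 0)
      = fun i => if ((Tuple.sort hHt.eigenvalues).symm i : ℕ) < j + 1 then (1:ℂ) else 0 := by
    funext i
    show star (if ((Tuple.sort hHt.eigenvalues).symm i : ℕ) < j + 1 then (1:ℂ) else 0)
      = if ((Tuple.sort hHt.eigenvalues).symm i : ℕ) < j + 1 then (1:ℂ) else 0
    split <;> simp
  rw [hstar]

end Helpers

/-- If `H̃ ≤ H` and the projection `P̃` onto the `j+1` lowest eigenvectors of `H̃`
satisfies `‖P̃(H - H̃)P̃‖ ≤ δ`, then `ε_j - δ ≤ ε̃_j ≤ ε_j`. -/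
theorem eigenvalue_truncation_bound {n : ℕ} {H Ht : Matrix (Fin n) (Fin n) ℂ}
    (hH : H.PosSemidef) (hHt : Ht.PosSemidef) (hle : (H - Ht).PosSemidef)
    (j : Fin n) (δ : ℝ)
    (hδ : ‖lowProj hHt.1 (j : ℕ) * (H - Ht) * lowProj hHt.1 (j : ℕ)‖ ≤ δ) :
    sortedEig hH.1 j - δ ≤ sortedEig hHt.1 j ∧ sortedEig hHt.1 j ≤ sortedEig hH.1 j := by
  have hjn : (j : ℕ) + 1 ≤ n := j.2
  -- quadratic form splitting
  have hsplit : ∀ v : EuclideanSpace ℂ (Fin n),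
      (inner ℂ v (Matrix.toEuclideanLin H v) : ℂ).re
        = (inner ℂ v (Matrix.toEuclideanLin Ht v) : ℂ).re
          + (inner ℂ v (Matrix.toEuclideanLin (H - Ht) v) : ℂ).re := by
    intro v
    rw [map_sub, LinearMap.sub_apply, inner_sub_right]
    simp [Complex.sub_re]
  constructor
  · -- lower bound : sortedEig hH j ≤ sortedEig hHt j + δ
    have key : sortedEig hH.1 j ≤ sortedEig hHt.1 j + δ := by
      set Vt := eigSpan hHt.1 (fun i => ((Tuple.sort hHt.1.eigenvalues).symm i : ℕ) < (j : ℕ) + 1)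
        with hVt
      apply sortedEig_le_of_subspace hH.1 j _ Vt
      · rw [hVt, finrank_eigSpan,
          card_perm_subtype (Tuple.sort hHt.1.eigenvalues) (fun k => (k : ℕ) < (j : ℕ) + 1),
          card_lt_subtype' hjn]
      · intro v hv
        have hPv := lowProj_fix hHt.1 (j : ℕ) hv
        set P := lowProj hHt.1 (j : ℕ) with hP
        -- bound on the (H - Ht) part
        have hpert : (inner ℂ v (Matrix.toEuclideanLin (H - Ht) v) : ℂ).re ≤ δ * ‖v‖ ^ 2 := by
          have hermP : P.IsHermitian := by
            rw [Matrix.IsHermitian, ← Matrix.star_eq_conjTranspose]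
            exact lowProj_conjTranspose hHt.1 (j : ℕ)
          have hmul : ∀ (A B : Matrix (Fin n) (Fin n) ℂ) (w : EuclideanSpace ℂ (Fin n)),
              Matrix.toEuclideanLin (A * B) w
                = Matrix.toEuclideanLin A (Matrix.toEuclideanLin B w) := by
            intro A B w
            apply (WithLp.equiv 2 _).injective
            simp [← Matrix.mulVec_mulVec]
          have hrw : (inner ℂ v (Matrix.toEuclideanLin (H - Ht) v) : ℂ)
              = inner ℂ v (Matrix.toEuclideanLin (P * (H - Ht) * P) v) := by
            rw [hmul, hmul, hPv,
              ← (Matrix.isHermitian_iff_isSymmetric.mp hermP) v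
                (Matrix.toEuclideanLin (H - Ht) v), hPv]
          rw [hrw]
          have h1 : (inner ℂ v (Matrix.toEuclideanLin (P * (H - Ht) * P) v) : ℂ).re
              ≤ ‖(inner ℂ v (Matrix.toEuclideanLin (P * (H - Ht) * P) v) : ℂ)‖ :=
            Complex.re_le_norm _
          have h2 : ‖(inner ℂ v (Matrix.toEuclideanLin (P * (H - Ht) * P) v) : ℂ)‖
              ≤ ‖v‖ * ‖Matrix.toEuclideanLin (P * (H - Ht) * P) v‖ :=
            norm_inner_le_norm _ _
          have h3 : ‖Matrix.toEuclideanLin (P * (H - Ht) * P) v‖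
              ≤ ‖P * (H - Ht) * P‖ * ‖v‖ :=
            Matrix.l2_opNorm_mulVec _ v
          have h4 : (0:ℝ) ≤ ‖v‖ := norm_nonneg v
          have h5 : ‖P * (H - Ht) * P‖ ≤ δ := hδ
          nlinarith
        have hHt_bound : (inner ℂ v (Matrix.toEuclideanLin Ht v) : ℂ).re
            ≤ sortedEig hHt.1 j * ‖v‖ ^ 2 :=
          quad_le_of_mem hHt.1
            (fun i hi => eig_le_sorted hHt.1 j i (Nat.lt_succ_iff.mp hi)) hv
        rw [hsplit v]
        nlinarith [sq_nonneg ‖v‖]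
    linarith
  · -- upper bound
    set VH := eigSpan hH.1 (fun i => ((Tuple.sort hH.1.eigenvalues).symm i : ℕ) < (j : ℕ) + 1)
      with hVH
    apply sortedEig_le_of_subspace hHt.1 j _ VH
    · rw [hVH, finrank_eigSpan,
        card_perm_subtype (Tuple.sort hH.1.eigenvalues) (fun k => (k : ℕ) < (j : ℕ) + 1),
        card_lt_subtype' hjn]
    · intro v hv
      have h1 : (inner ℂ v (Matrix.toEuclideanLin H v) : ℂ).re ≤ sortedEig hH.1 j * ‖v‖ ^ 2 :=
        quad_le_of_mem hH.1 (fun i hi => eig_le_sorted hH.1 j i (Nat.lt_succ_iff.mp hi)) hv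
      have h2 := re_inner_nonneg_of_posSemidef hle v
      have := hsplit v
      linarith
end

section
/- Let H be a Hermitian positive semidefinite n×n matrix, A a matrix with ‖A‖ ≤ 1, ε ≥ 0, λ > 0, R ≥ 0. Suppose for all ε′ ≥ ε the spectral projections satisfy ‖Π_{[ε′,∞)} A Π_{[0,ε]}‖ ≤ e^{-λ(ε′-ε-2R)}. Let |ψ⟩ be a unit vector, |φ⟩ = A Π_{[0,ε]}|ψ⟩ (assumed nonzero), and ε_φ = ⟨φ|H|φ⟩/‖φ‖². Then ‖φ‖ ≤ (2/√λ)·e^{-λ(ε_φ - ε - 2R)}, provided λ ≤ 1/2. -/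
open scoped Matrix.Norms.L2Operator Classical ComplexOrder

section Aux

open Matrix MeasureTheory Set

lemma integral_exp_decay (a b c : ℝ) (hb : 0 < b) :
    ∫ t in Set.Ioi a, Real.exp (-b * (t - c)) = Real.exp (-b * (a - c)) / b := by
  have hderiv : ∀ t ∈ Set.Ici a,
      HasDerivAt (fun t => -Real.exp (-b * (t - c)) / b) (Real.exp (-b * (t - c))) t := by
    intro t _
    have h1 : HasDerivAt (fun t : ℝ => -b * (t - c)) (-b) t := by
      simpa using ((hasDerivAt_id t).sub_const c).const_mul (-b)
    have h2 := (Real.hasDerivAt_exp (-b * (t - c))).comp t h1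
    have h3 := h2.const_mul (-1 / b)
    convert h3 using 1
    · rfl
    · rfl
    · funext s; simp only [Function.comp]; ring_nf
    · field_simp [hb.ne']
  have hfun : (fun t => Real.exp (-b * (t - c)))
      = fun t => Real.exp (b * c) * Real.exp (-b * t) := by
    funext t; rw [← Real.exp_add]; ring_nf
  have hint : MeasureTheory.IntegrableOn (fun t => Real.exp (-b * (t - c))) (Set.Ioi a) := by
    rw [hfun]
    exact (exp_neg_integrableOn_Ioi a hb).const_mul _
  have hbot : Filter.Tendsto (fun t : ℝ => -b * (t - c)) Filter.atTop Filter.atBot := by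
    apply Filter.Tendsto.const_mul_atTop_of_neg (neg_neg_iff_pos.2 hb)
    exact Filter.tendsto_atTop_add_const_right Filter.atTop (-c) Filter.tendsto_id
  have htend : Filter.Tendsto (fun t => -Real.exp (-b * (t - c)) / b)
      Filter.atTop (nhds 0) := by
    have h := Real.tendsto_exp_atBot.comp hbot
    have := (h.neg).div_const b
    simpa using this
  have := MeasureTheory.integral_Ioi_of_hasDerivAt_of_tendsto' hderiv hint htend
  rw [this]
  ring

lemma sum_max_le_integral {n : ℕ} (w : Fin n → ℝ) (a : Fin n → ℝ)
    (μ : ℝ) (g : ℝ → ℝ) (hg : MeasureTheory.IntegrableOn g (Set.Ioi μ))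
    (hbd : ∀ t ∈ Set.Ioi μ,
      (∑ i, Set.indicator (Set.Iic (a i)) (fun _ => w i) t) ≤ g t) :
    ∑ i, w i * max (a i - μ) 0 ≤ ∫ t in Set.Ioi μ, g t := by
  have hint : ∀ i : Fin n, MeasureTheory.IntegrableOn
      (Set.indicator (Set.Iic (a i)) fun _ => w i) (Set.Ioi μ) := by
    intro i
    rw [MeasureTheory.IntegrableOn, MeasureTheory.integrable_indicator_iff measurableSet_Iic]
    refine MeasureTheory.integrableOn_const ?_
    rw [MeasureTheory.Measure.restrict_apply measurableSet_Iic, Set.inter_comm,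
      Set.Ioi_inter_Iic, Real.volume_Ioc]
    exact ENNReal.ofReal_ne_top
  have hfint : MeasureTheory.IntegrableOn
      (fun t => ∑ i, Set.indicator (Set.Iic (a i)) (fun _ => w i) t) (Set.Ioi μ) :=
    MeasureTheory.integrable_finset_sum _ (fun i _ => hint i)
  have step1 : ∑ i, w i * max (a i - μ) 0
      = ∫ t in Set.Ioi μ, ∑ i, Set.indicator (Set.Iic (a i)) (fun _ => w i) t := by
    rw [MeasureTheory.integral_finset_sum _ (fun i _ => hint i)]
    refine Finset.sum_congr rfl fun i _ => ?_
    rw [MeasureTheory.setIntegral_indicator measurableSet_Iic]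
    rw [Set.Ioi_inter_Iic, MeasureTheory.setIntegral_const, Real.volume_real_Ioc,
      smul_eq_mul, mul_comm]
  rw [step1]
  exact MeasureTheory.setIntegral_mono_on hfint hg measurableSet_Ioi hbd

lemma dot_U_shift {n : ℕ} (U : Matrix (Fin n) (Fin n) ℂ) (u w : Fin n → ℂ) :
    dotProduct (star u) (U *ᵥ w) = dotProduct (star (Uᴴ *ᵥ u)) w := by
  rw [Matrix.star_mulVec, Matrix.conjTranspose_conjTranspose, Matrix.dotProduct_mulVec]

lemma norm_sq_eq_re_dot {n : ℕ} (v : EuclideanSpace ℂ (Fin n)) :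
    ‖v‖ ^ 2 = (dotProduct (star (WithLp.equiv 2 (Fin n → ℂ) v))
      (WithLp.equiv 2 (Fin n → ℂ) v)).re := by
  rw [← inner_self_eq_norm_sq (𝕜 := ℂ) v, EuclideanSpace.inner_eq_star_dotProduct, dotProduct_comm]
  rfl

lemma toEuclideanLin_mul_apply {n : ℕ} (M N : Matrix (Fin n) (Fin n) ℂ)
    (v : EuclideanSpace ℂ (Fin n)) :
    Matrix.toEuclideanLin (M * N) v = Matrix.toEuclideanLin M (Matrix.toEuclideanLin N v) := by
  simp [Matrix.toEuclideanLin_apply, Matrix.mulVec_mulVec]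

lemma toEuclideanLin_norm_le {n : ℕ} (M : Matrix (Fin n) (Fin n) ℂ)
    (v : EuclideanSpace ℂ (Fin n)) :
    ‖Matrix.toEuclideanLin M v‖ ≤ ‖M‖ * ‖v‖ := by
  simpa [Matrix.toEuclideanLin_apply] using Matrix.l2_opNorm_mulVec M v

lemma key_dot {n : ℕ} {H : Matrix (Fin n) (Fin n) ℂ} (hH : H.IsHermitian)
    (g : Fin n → ℂ) (v : EuclideanSpace ℂ (Fin n)) :
    (inner ℂ v (Matrix.toEuclideanLin
        ((hH.eigenvectorUnitary : Matrix (Fin n) (Fin n) ℂ) * Matrix.diagonal g *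
          star (hH.eigenvectorUnitary : Matrix (Fin n) (Fin n) ℂ)) v) : ℂ)
      = ∑ i, g i *
          ((‖(star (hH.eigenvectorUnitary : Matrix (Fin n) (Fin n) ℂ) *ᵥ
              WithLp.equiv 2 (Fin n → ℂ) v) i‖ : ℂ) ^ 2) := by
  set U := (hH.eigenvectorUnitary : Matrix (Fin n) (Fin n) ℂ) with hU
  set u := WithLp.equiv 2 (Fin n → ℂ) v with hu
  set x := star U *ᵥ u with hx
  rw [EuclideanSpace.inner_eq_star_dotProduct, dotProduct_comm]
  rw [Matrix.ofLp_toEuclideanLin_apply]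
  change star u ⬝ᵥ ((U * Matrix.diagonal g * star U) *ᵥ u) = _
  rw [Matrix.star_eq_conjTranspose]
  rw [← Matrix.mulVec_mulVec, ← Matrix.mulVec_mulVec]
  rw [dot_U_shift]
  have hxx : Uᴴ *ᵥ u = x := by rw [hx, Matrix.star_eq_conjTranspose]
  rw [hxx]
  simp only [dotProduct, Matrix.mulVec_diagonal, Pi.star_apply]
  refine Finset.sum_congr rfl fun i _ => ?_
  have h1 : star (x i) * x i = (‖x i‖ : ℂ) ^ 2 := by
    rw [Complex.star_def, mul_comm, Complex.mul_conj]
    norm_cast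
    rw [Complex.normSq_eq_norm_sq]
  calc star (x i) * (g i * x i) = g i * (star (x i) * x i) := by ring
    _ = g i * (‖x i‖ : ℂ) ^ 2 := by rw [h1]

lemma sum_w_eq {n : ℕ} {H : Matrix (Fin n) (Fin n) ℂ} (hH : H.IsHermitian)
    (v : EuclideanSpace ℂ (Fin n)) :
    ∑ i, ‖(star (hH.eigenvectorUnitary : Matrix (Fin n) (Fin n) ℂ) *ᵥ
        WithLp.equiv 2 (Fin n → ℂ) v) i‖ ^ 2 = ‖v‖ ^ 2 := by
  have h := key_dot hH (fun _ => (1 : ℂ)) v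
  have h2 : (hH.eigenvectorUnitary : Matrix (Fin n) (Fin n) ℂ) *
      Matrix.diagonal (fun _ : Fin n => (1 : ℂ)) *
      star (hH.eigenvectorUnitary : Matrix (Fin n) (Fin n) ℂ) = 1 := by
    rw [Matrix.diagonal_one, mul_one]
    exact Unitary.coe_mul_star_self _
  rw [h2] at h
  have h3 : Matrix.toEuclideanLin (1 : Matrix (Fin n) (Fin n) ℂ) v = v := by
    apply (WithLp.equiv 2 (Fin n → ℂ)).injective
    simp [Matrix.toEuclideanLin_apply]
  rw [h3, EuclideanSpace.inner_eq_star_dotProduct] at h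
  have h4 := norm_sq_eq_re_dot v
  rw [h4, show star (WithLp.equiv 2 (Fin n → ℂ) v) ⬝ᵥ WithLp.equiv 2 (Fin n → ℂ) v = _ from
    (dotProduct_comm _ _).trans h]
  rw [Complex.re_sum]
  simp [← Complex.ofReal_pow]

lemma proj_norm_sq {n : ℕ} {H : Matrix (Fin n) (Fin n) ℂ} (hH : H.IsHermitian)
    (S : Set ℝ) (v : EuclideanSpace ℂ (Fin n)) :
    ‖Matrix.toEuclideanLin (spectralProj hH S) v‖ ^ 2
      = ∑ i, if hH.eigenvalues i ∈ S then
          ‖(star (hH.eigenvectorUnitary : Matrix (Fin n) (Fin n) ℂ) *ᵥ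
            WithLp.equiv 2 (Fin n → ℂ) v) i‖ ^ 2 else 0 := by
  set U := (hH.eigenvectorUnitary : Matrix (Fin n) (Fin n) ℂ) with hUdef
  set d : Fin n → ℂ := fun i => if hH.eigenvalues i ∈ S then (1 : ℂ) else 0 with hd
  have hsd : star d = d := by
    funext i
    by_cases hi : hH.eigenvalues i ∈ S <;> simp [hd, hi]
  have hstar : star (spectralProj hH S) = spectralProj hH S := by
    rw [spectralProj, ← hd, Matrix.star_mul, Matrix.star_mul, star_star,
      Matrix.star_eq_conjTranspose (Matrix.diagonal d), Matrix.diagonal_conjTranspose, hsd,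
      mul_assoc]
  have hPP : star (spectralProj hH S) * spectralProj hH S
      = U * Matrix.diagonal d * star U := by
    rw [hstar, spectralProj, ← hd]
    calc (U * Matrix.diagonal d * star U) * (U * Matrix.diagonal d * star U)
        = U * (Matrix.diagonal d * ((star U * U) * Matrix.diagonal d)) * star U := by
          simp only [mul_assoc]
      _ = U * (Matrix.diagonal d * Matrix.diagonal d) * star U := by
          rw [Unitary.coe_star_mul_self, one_mul]
      _ = U * Matrix.diagonal d * star U := by
          rw [Matrix.diagonal_mul_diagonal]
          have hdd : (fun i => d i * d i) = d := by
            funext i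
            by_cases hi : hH.eigenvalues i ∈ S <;> simp [hd, hi]
          rw [hdd]
  have h1 : (‖Matrix.toEuclideanLin (spectralProj hH S) v‖ : ℝ) ^ 2
      = (inner ℂ v (Matrix.toEuclideanLin (U * Matrix.diagonal d * star U) v) : ℂ).re := by
    rw [norm_sq_eq_re_dot, EuclideanSpace.inner_eq_star_dotProduct]
    congr 1
    simp only [WithLp.equiv_apply, Matrix.ofLp_toEuclideanLin_apply]
    rw [dotProduct_comm ((U * Matrix.diagonal d * star U) *ᵥ _)]
    rw [Matrix.star_mulVec, Matrix.dotProduct_mulVec, Matrix.vecMul_vecMul,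
      ← Matrix.dotProduct_mulVec, ← Matrix.star_eq_conjTranspose, hPP]
  rw [h1, key_dot hH d v, Complex.re_sum]
  refine Finset.sum_congr rfl fun i _ => ?_
  by_cases hi : hH.eigenvalues i ∈ S <;> simp [hd, hi, ← Complex.ofReal_pow, hUdef]

lemma spectralProj_opNorm_le_one {n : ℕ} {H : Matrix (Fin n) (Fin n) ℂ}
    (hH : H.IsHermitian) (S : Set ℝ) : ‖spectralProj hH S‖ ≤ 1 := by
  rw [Matrix.l2_opNorm_def]
  refine ContinuousLinearMap.opNorm_le_bound _ zero_le_one fun v => ?_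
  rw [one_mul]
  have h1 : ‖Matrix.toEuclideanLin (spectralProj hH S) v‖ ^ 2 ≤ ‖v‖ ^ 2 := by
    rw [proj_norm_sq hH S v, ← sum_w_eq hH v]
    refine Finset.sum_le_sum fun i _ => ?_
    by_cases hi : hH.eigenvalues i ∈ S <;> simp [hi, sq_nonneg]
  have h2 : ‖Matrix.toEuclideanLin (spectralProj hH S) v‖ ≤ ‖v‖ := by
    nlinarith [norm_nonneg (Matrix.toEuclideanLin (spectralProj hH S) v), norm_nonneg v]
  exact h2

end Aux

set_option maxHeartbeats 1000000

/-- If the off-diagonal spectral weights of `A` decay as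
`‖Π_{[ε',∞)} A Π_{[0,ε]}‖ ≤ e^{-lam(ε'-ε-2R)}`, then the state `φ = A Π_{[0,ε]} ψ`
with mean energy `ε_φ` satisfies `‖φ‖ ≤ (2/√lam) e^{-lam(ε_φ-ε-2R)}`. -/
theorem norm_phi_energy_bound {n : ℕ} {H : Matrix (Fin n) (Fin n) ℂ} (hH : H.PosSemidef)
    (A : Matrix (Fin n) (Fin n) ℂ) (hA : ‖A‖ ≤ 1) (ε lam R : ℝ)
    (hε : 0 ≤ ε) (hlam0 : 0 < lam) (hlam : lam ≤ 1 / 2) (hR : 0 ≤ R)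
    (hbound : ∀ ε' : ℝ, ε ≤ ε' →
      ‖spectralProj hH.1 (Set.Ici ε') * A * spectralProj hH.1 (Set.Icc 0 ε)‖ ≤
        Real.exp (-lam * (ε' - ε - 2 * R)))
    (ψ : EuclideanSpace ℂ (Fin n)) (hψ : ‖ψ‖ = 1)
    (φ : EuclideanSpace ℂ (Fin n))
    (hφ : φ = Matrix.toEuclideanLin (A * spectralProj hH.1 (Set.Icc 0 ε)) ψ)
    (hφ0 : φ ≠ 0) (εφ : ℝ)
    (hεφ : εφ = (inner ℂ φ (Matrix.toEuclideanLin H φ) : ℂ).re / ‖φ‖ ^ 2) :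
    ‖φ‖ ≤ 2 / Real.sqrt lam * Real.exp (-lam * (εφ - ε - 2 * R)) := by
  have hPi : ‖spectralProj hH.1 (Set.Icc 0 ε)‖ ≤ 1 := spectralProj_opNorm_le_one hH.1 _
  have hφ1 : ‖φ‖ ≤ 1 := by
    rw [hφ]
    refine le_trans (toEuclideanLin_norm_le _ _) ?_
    rw [hψ, mul_one]
    refine le_trans (Matrix.l2_opNorm_mul A _) ?_
    calc ‖A‖ * ‖spectralProj hH.1 (Set.Icc 0 ε)‖ ≤ 1 * 1 :=
          mul_le_mul hA hPi (norm_nonneg _) zero_le_one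
      _ = 1 := one_mul 1
  rcases le_or_gt (εφ - ε - 2 * R) 1 with hd | hd
  · -- easy case : the right hand side is at least 1
    have hs0 : 0 < Real.sqrt lam := Real.sqrt_pos.2 hlam0
    have h1 : Real.sqrt lam ≤ 1 := by
      rw [show (1:ℝ) = Real.sqrt 1 by simp]
      exact Real.sqrt_le_sqrt (by linarith)
    have h2 : Real.exp (-lam) ≤ Real.exp (-lam * (εφ - ε - 2 * R)) := by
      apply Real.exp_le_exp.2; nlinarith
    have h3 : (1:ℝ)/2 ≤ Real.exp (-lam) := by
      have := Real.add_one_le_exp (-lam); linarith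
    have hE2 : (1:ℝ)/2 ≤ Real.exp (-lam * (εφ - ε - 2 * R)) := le_trans h3 h2
    have h4 : (2:ℝ) ≤ 2 / Real.sqrt lam := by
      rw [le_div_iff₀ hs0]; nlinarith
    calc ‖φ‖ ≤ 1 := hφ1
      _ ≤ 2 / Real.sqrt lam * Real.exp (-lam * (εφ - ε - 2 * R)) := by
          nlinarith [Real.exp_pos (-lam * (εφ - ε - 2 * R))]
  · -- hard case
    set W := ‖φ‖ ^ 2 with hWdef
    have hWpos : 0 < W := by
      rw [hWdef]
      exact pow_pos (norm_pos_iff.2 hφ0) 2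
    set x := Matrix.mulVec (star (hH.1.eigenvectorUnitary : Matrix (Fin n) (Fin n) ℂ))
      (WithLp.equiv 2 (Fin n → ℂ) φ) with hx
    set w : Fin n → ℝ := fun i => ‖x i‖ ^ 2 with hwdef
    set ev := hH.1.eigenvalues with hev
    have hw0 : ∀ i, 0 ≤ w i := fun i => sq_nonneg _
    have hW : ∑ i, w i = W := sum_w_eq hH.1 φ
    have hE : (inner ℂ φ (Matrix.toEuclideanLin H φ) : ℂ).re = ∑ i, ev i * w i := by
      have h := key_dot hH.1 (RCLike.ofReal ∘ hH.1.eigenvalues) φ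
      rw [← Unitary.conjStarAlgAut_apply (S := ℂ) hH.1.eigenvectorUnitary, ← Matrix.IsHermitian.spectral_theorem hH.1] at h
      rw [h, Complex.re_sum]
      refine Finset.sum_congr rfl fun i _ => ?_
      simp [hwdef, hx, hev, ← Complex.ofReal_pow, ← Complex.ofReal_mul]
    have hεφW : εφ * W = ∑ i, ev i * w i := by
      rw [hεφ, div_mul_cancel₀ _ (ne_of_gt hWpos), hE]
    set μ := εφ - 1 with hμdef
    have hμε : ε ≤ μ := by rw [hμdef]; linarith
    have htail : ∀ t ∈ Set.Ioi μ, (∑ i, Set.indicator (Set.Iic (ev i)) (fun _ => w i) t)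
        ≤ Real.exp (-(2 * lam) * (t - (ε + 2 * R))) := by
      intro t ht
      have hεt : ε ≤ t := le_trans hμε (le_of_lt ht)
      have h1 : (∑ i, Set.indicator (Set.Iic (ev i)) (fun _ => w i) t)
          = ‖Matrix.toEuclideanLin (spectralProj hH.1 (Set.Ici t)) φ‖ ^ 2 := by
        rw [proj_norm_sq hH.1 (Set.Ici t) φ]
        refine Finset.sum_congr rfl fun i _ => ?_
        rw [Set.indicator_apply]
        by_cases hit : t ≤ ev i
        · simp [hit, Set.mem_Iic, Set.mem_Ici, hwdef, hx, hev]
        · simp [hit, Set.mem_Iic, Set.mem_Ici, hwdef, hx, hev]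
      have h2' : Matrix.toEuclideanLin (spectralProj hH.1 (Set.Ici t)) φ
          = Matrix.toEuclideanLin
              (spectralProj hH.1 (Set.Ici t) * A * spectralProj hH.1 (Set.Icc 0 ε)) ψ := by
        rw [hφ, ← toEuclideanLin_mul_apply, mul_assoc]
      have h3 : ‖Matrix.toEuclideanLin (spectralProj hH.1 (Set.Ici t)) φ‖
          ≤ Real.exp (-lam * (t - ε - 2 * R)) := by
        rw [h2']
        refine le_trans (toEuclideanLin_norm_le _ _) ?_
        rw [hψ, mul_one]
        exact hbound t hεt
      rw [h1]
      have h4 : Real.exp (-lam * (t - ε - 2 * R)) ^ 2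
          = Real.exp (-(2 * lam) * (t - (ε + 2 * R))) := by
        rw [pow_two, ← Real.exp_add]
        congr 1
        ring
      calc ‖Matrix.toEuclideanLin (spectralProj hH.1 (Set.Ici t)) φ‖ ^ 2
          ≤ Real.exp (-lam * (t - ε - 2 * R)) ^ 2 := by
            have := norm_nonneg (Matrix.toEuclideanLin (spectralProj hH.1 (Set.Ici t)) φ)
            nlinarith [Real.exp_pos (-lam * (t - ε - 2 * R))]
        _ = _ := h4
    have hgint : MeasureTheory.IntegrableOn
        (fun t => Real.exp (-(2 * lam) * (t - (ε + 2 * R)))) (Set.Ioi μ) := by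
      have heq : (fun t => Real.exp (-(2 * lam) * (t - (ε + 2 * R))))
          = fun t => Real.exp ((2 * lam) * (ε + 2 * R)) * Real.exp (-(2 * lam) * t) := by
        funext t; rw [← Real.exp_add]; ring_nf
      rw [heq]
      exact (exp_neg_integrableOn_Ioi _ (by linarith)).const_mul _
    have hsum := sum_max_le_integral w ev μ _ hgint htail
    have hintval := integral_exp_decay μ (2 * lam) (ε + 2 * R) (by linarith)
    have main : εφ * W ≤ μ * W + Real.exp (-(2 * lam) * (μ - (ε + 2 * R))) / (2 * lam) := by
      rw [hεφW]
      calc ∑ i, ev i * w i ≤ ∑ i, (μ * w i + w i * max (ev i - μ) 0) := by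
            refine Finset.sum_le_sum fun i _ => ?_
            nlinarith [hw0 i, le_max_left (ev i - μ) 0, le_max_right (ev i - μ) 0]
        _ = μ * (∑ i, w i) + ∑ i, w i * max (ev i - μ) 0 := by
            rw [Finset.sum_add_distrib, Finset.mul_sum]
        _ ≤ μ * W + Real.exp (-(2 * lam) * (μ - (ε + 2 * R))) / (2 * lam) := by
            rw [hW]
            have h5 := le_trans hsum (le_of_eq hintval)
            linarith
    have hWle : W ≤ Real.exp (-(2 * lam) * (μ - (ε + 2 * R))) / (2 * lam) := by
      have h6 : εφ * W - μ * W = W := by rw [hμdef]; ring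
      linarith
    have hrhs0 : 0 ≤ 2 / Real.sqrt lam * Real.exp (-lam * (εφ - ε - 2 * R)) := by positivity
    have hsq : W ≤ (2 / Real.sqrt lam * Real.exp (-lam * (εφ - ε - 2 * R))) ^ 2 := by
      refine le_trans hWle ?_
      have hexp8 : Real.exp (2 * lam) ≤ 8 := by
        calc Real.exp (2 * lam) ≤ Real.exp 1 := Real.exp_le_exp.2 (by linarith)
          _ ≤ 8 := by nlinarith [Real.exp_one_lt_d9]
      have hEq : (2 / Real.sqrt lam * Real.exp (-lam * (εφ - ε - 2 * R))) ^ 2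
          = 4 / lam * Real.exp (-(2 * lam) * (εφ - ε - 2 * R)) := by
        rw [mul_pow, div_pow, Real.sq_sqrt hlam0.le,
          pow_two (Real.exp (-lam * (εφ - ε - 2 * R))), ← Real.exp_add]
        have harg : -lam * (εφ - ε - 2 * R) + -lam * (εφ - ε - 2 * R)
            = -(2 * lam) * (εφ - ε - 2 * R) := by ring
        rw [harg]
        norm_num
      have hsplit : Real.exp (-(2 * lam) * (μ - (ε + 2 * R)))
          = Real.exp (2 * lam) * Real.exp (-(2 * lam) * (εφ - ε - 2 * R)) := by
        rw [← Real.exp_add, hμdef]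
        congr 1
        ring
      rw [hEq, hsplit, div_le_iff₀ (by linarith : (0:ℝ) < 2 * lam)]
      have h8 : 4 / lam * Real.exp (-(2 * lam) * (εφ - ε - 2 * R)) * (2 * lam)
          = 8 * Real.exp (-(2 * lam) * (εφ - ε - 2 * R)) := by
        field_simp
        ring
      rw [h8]
      nlinarith [Real.exp_pos (-(2 * lam) * (εφ - ε - 2 * R))]
    calc ‖φ‖ = Real.sqrt W := by rw [hWdef, Real.sqrt_sq (norm_nonneg φ)]
      _ ≤ Real.sqrt ((2 / Real.sqrt lam * Real.exp (-lam * (εφ - ε - 2 * R))) ^ 2) :=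
          Real.sqrt_le_sqrt hsq
      _ = _ := Real.sqrt_sq hrhs0
end
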